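/- Let d ≥ 1. Let η, σ ∈ ℝ^d with η_i ≥ σ_i ≥ 0 for all i; let b = (b_{ij}) be a d×d real matrix with b_{ij} ≥ 0 for i ≠ j, and c = (c_{ij}) a d×d real matrix; set γ_i(x) = Σ_{j=1}^d c_{ij} x_i x_j. Let ν be a measure on ℝ^d concentrated on {z : z_j ≥ 0 for all j} with ν({0}) = 0 and ∫ |z| dν(z) < ∞, and for each i let μ_i be a measure on ℝ^d concentrated on {z : z_j ≥ 0 for all j} with μ_i({0}) = 0 and ∫ ( z_i + Σ_{j≠i} z_j ) dμ_i(z) < ∞. Define f on the open positive orthant by f(x) = 1 + Σ_{i=1}^d (x_i − log x_i), and for x with x_i > 0 for all i define Lf(x) = Σ_{i=1}^d (η_i + Σ_{j=1}^d b_{ij} x_j + γ_i(x))·(1 − 1/x_i) + Σ_{i=1}^d σ_i/x_i + ∫ ( f(x+z) − f(x) ) dν(z) + Σ_{i=1}^d x_i ∫ ( f(x+z) − f(x) − (1 − 1/x_i) z_i ) dμ_i(z). Then all the integrals are well defined, and for every m > 0 there exists a constant K > 0 such that Lf(x) ≤ K·f(x) for every x with 0 < x_i < m for all i. -/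

import Mathlib

open MeasureTheory Real BigOperators

lemma aux_log_add_le {a t : ℝ} (ha : 0 < a) (ht : 0 ≤ t) :
    Real.log (a + t) ≤ Real.log a + t / a := by
  have h1 : Real.log (a + t) - Real.log a = Real.log ((a + t) / a) :=
    (Real.log_div (by positivity) ha.ne').symm
  have h2 : Real.log ((a + t) / a) ≤ (a + t) / a - 1 :=
    Real.log_le_sub_one_of_pos (by positivity)
  have h3 : (a + t) / a - 1 = t / a := by field_simp; ring
  linarith [h1 ▸ h2, h3 ▸ h2]

lemma aux_log_le_add {a t : ℝ} (ha : 0 < a) (ht : 0 ≤ t) :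
    Real.log a ≤ Real.log (a + t) :=
  Real.log_le_log ha (by linarith)

lemma aux_coord_le_norm {d : ℕ} (z : EuclideanSpace ℝ (Fin d)) (i : Fin d) :
    |z i| ≤ ‖z‖ := by
  rw [EuclideanSpace.norm_eq]
  have h : |z i| = Real.sqrt (‖z i‖ ^ 2) := by
    rw [Real.norm_eq_abs, Real.sqrt_sq_eq_abs, abs_abs]
  rw [h]
  exact Real.sqrt_le_sqrt (Finset.single_le_sum (fun j _ => sq_nonneg ‖z j‖) (Finset.mem_univ i))

/-- Foster–Lyapunov inequality `Lf ≤ K·f` on `(0,m)^d` for the generator of a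
CIMBI process applied to `f(x) = 1 + Σᵢ (xᵢ − log xᵢ)`, in the critical case `ηᵢ ≥ σᵢ`, where the branching Lévy measures
have finite first moments in their own coordinate. -/
theorem cimbi_foster_lyapunov_critical
    (d : ℕ) (hd : 1 ≤ d)
    (η σ : Fin d → ℝ) (hησ : ∀ i, 0 ≤ σ i ∧ σ i ≤ η i)
    (b c : Matrix (Fin d) (Fin d) ℝ)
    (hb : ∀ i j, i ≠ j → 0 ≤ b i j)
    (γ : EuclideanSpace ℝ (Fin d) → Fin d → ℝ)
    (hγ : ∀ (x : EuclideanSpace ℝ (Fin d)) (i : Fin d),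
      γ x i = ∑ j, c i j * x i * x j)
    (ν : Measure (EuclideanSpace ℝ (Fin d)))
    (hν : ∀ᵐ z ∂ν, ∀ j, 0 ≤ z j)
    (hν0 : ν ({0} : Set (EuclideanSpace ℝ (Fin d))) = 0)
    (hνint : Integrable (fun z => ‖z‖) ν)
    (μ : Fin d → Measure (EuclideanSpace ℝ (Fin d)))
    (hμ : ∀ i, ∀ᵐ z ∂(μ i), ∀ j, 0 ≤ z j)
    (hμ0 : ∀ i, μ i ({0} : Set (EuclideanSpace ℝ (Fin d))) = 0)
    (hμint : ∀ i, Integrable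
      (fun z => z i + ∑ j ∈ Finset.univ.erase i, z j) (μ i))
    (f : EuclideanSpace ℝ (Fin d) → ℝ)
    (hf : ∀ x : EuclideanSpace ℝ (Fin d), f x = 1 + ∑ i, (x i - Real.log (x i)))
    (Lf : EuclideanSpace ℝ (Fin d) → ℝ)
    (hLf : ∀ x : EuclideanSpace ℝ (Fin d), (∀ i, 0 < x i) →
      Lf x = ∑ i, (η i + (∑ j, b i j * x j) + γ x i) * (1 - 1 / x i)
        + ∑ i, σ i / x i
        + ∫ z, (f (x + z) - f x) ∂ν
        + ∑ i, x i * ∫ z, (f (x + z) - f x - (1 - 1 / x i) * z i) ∂(μ i)) :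
    (∀ x : EuclideanSpace ℝ (Fin d), (∀ i, 0 < x i) →
      Integrable (fun z => f (x + z) - f x) ν ∧
      ∀ i, Integrable (fun z => f (x + z) - f x - (1 - 1 / x i) * z i) (μ i)) ∧
    ∀ m > (0 : ℝ), ∃ K > (0 : ℝ), ∀ x : EuclideanSpace ℝ (Fin d),
      (∀ i, 0 < x i ∧ x i < m) → Lf x ≤ K * f x := by
  -- coordinatewise difference formula
  have hdiff : ∀ x z : EuclideanSpace ℝ (Fin d),
      f (x + z) - f x = ∑ i, (z i - (Real.log (x i + z i) - Real.log (x i))) := by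
    intro x z
    have h1 : f (x + z) = 1 + ∑ i, ((x i + z i) - Real.log (x i + z i)) := hf (x + z)
    have h2 : ∑ i, (((x i + z i) - Real.log (x i + z i)) - (x i - Real.log (x i)))
        = ∑ i, (z i - (Real.log (x i + z i) - Real.log (x i))) :=
      Finset.sum_congr rfl fun i _ => by ring
    have h3 := Finset.sum_sub_distrib (s := Finset.univ)
      (f := fun i => (x i + z i) - Real.log (x i + z i))
      (g := fun i => x i - Real.log (x i))
    rw [h1, hf x, ← h2, h3]
    ring
  -- scalar bounds
  have hub : ∀ (a t : ℝ), 0 < a → 0 ≤ t →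
      t - (Real.log (a + t) - Real.log a) ≤ t := fun a t ha ht => by
    have := aux_log_le_add ha ht; linarith
  have hlb : ∀ (a t : ℝ), 0 < a → 0 ≤ t →
      -(t / a) ≤ t - (Real.log (a + t) - Real.log a) := fun a t ha ht => by
    have := aux_log_add_le ha ht; linarith
  have habs : ∀ (a t : ℝ), 0 < a → 0 ≤ t →
      |t - (Real.log (a + t) - Real.log a)| ≤ t + t / a := fun a t ha ht => by
    have h1 := hub a t ha ht
    have h2 := hlb a t ha ht
    have hta : 0 ≤ t / a := by positivity
    rw [abs_le]; constructor <;> linarith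
  -- measurability
  have hproj : ∀ i : Fin d, Measurable fun z : EuclideanSpace ℝ (Fin d) => z i :=
    fun i => (EuclideanSpace.proj (𝕜 := ℝ) i).continuous.measurable
  have hmeasf : ∀ x : EuclideanSpace ℝ (Fin d),
      Measurable fun z : EuclideanSpace ℝ (Fin d) => f (x + z) - f x := by
    intro x
    have h1 : Measurable fun z : EuclideanSpace ℝ (Fin d) =>
        ∑ i, (z i - (Real.log (x i + z i) - Real.log (x i))) := by
      apply Finset.measurable_sum
      intro i _
      have hz : Measurable fun z : EuclideanSpace ℝ (Fin d) => x i + z i :=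
        measurable_const.add (hproj i)
      exact (hproj i).sub ((Real.measurable_log.comp hz).sub measurable_const)
    have h2 : (fun z : EuclideanSpace ℝ (Fin d) => f (x + z) - f x)
        = fun z => ∑ i, (z i - (Real.log (x i + z i) - Real.log (x i))) := by
      funext z; exact hdiff x z
    rw [h2]; exact h1
  -- integrability for ν
  have hIν : ∀ x : EuclideanSpace ℝ (Fin d), (∀ i, 0 < x i) →
      Integrable (fun z => f (x + z) - f x) ν := by
    intro x hx
    have hdom : Integrable (fun z : EuclideanSpace ℝ (Fin d) =>
        (∑ j, (1 + 1 / x j)) * ‖z‖) ν := hνint.const_mul _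
    refine Integrable.mono' hdom (hmeasf x).aestronglyMeasurable ?_
    filter_upwards [hν] with z hz
    rw [Real.norm_eq_abs, hdiff x z]
    calc |∑ j, (z j - (Real.log (x j + z j) - Real.log (x j)))|
        ≤ ∑ j, |z j - (Real.log (x j + z j) - Real.log (x j))| :=
          Finset.abs_sum_le_sum_abs _ _
      _ ≤ ∑ j, (1 + 1 / x j) * ‖z‖ := by
          apply Finset.sum_le_sum; intro j _
          have h1 := habs (x j) (z j) (hx j) (hz j)
          have h2 : z j ≤ ‖z‖ := le_trans (le_abs_self _) (aux_coord_le_norm z j)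
          have h3 : z j / x j ≤ ‖z‖ / x j := (div_le_div_iff_of_pos_right (hx j)).mpr h2
          have h4 : (1 + 1 / x j) * ‖z‖ = ‖z‖ + ‖z‖ / x j := by ring
          linarith
      _ = (∑ j, (1 + 1 / x j)) * ‖z‖ := by rw [← Finset.sum_mul]
  -- integrability for μ i
  have hIμ : ∀ x : EuclideanSpace ℝ (Fin d), (∀ i, 0 < x i) → ∀ i,
      Integrable (fun z => f (x + z) - f x - (1 - 1 / x i) * z i) (μ i) := by
    intro x hx i
    have hmZ : Measurable fun z : EuclideanSpace ℝ (Fin d) =>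
        f (x + z) - f x - (1 - 1 / x i) * z i :=
      (hmeasf x).sub ((hproj i).const_mul _)
    have hdom : Integrable (fun z : EuclideanSpace ℝ (Fin d) =>
        ((∑ j, (1 + 1 / x j)) + (1 + 1 / x i)) *
          (z i + ∑ j ∈ Finset.univ.erase i, z j)) (μ i) := (hμint i).const_mul _
    refine Integrable.mono' hdom hmZ.aestronglyMeasurable ?_
    filter_upwards [hμ i] with z hz
    rw [Real.norm_eq_abs]
    have hSz : z i + ∑ j ∈ Finset.univ.erase i, z j = ∑ j, z j :=
      Finset.add_sum_erase _ _ (Finset.mem_univ i)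
    have hzS : ∀ j, z j ≤ z i + ∑ j ∈ Finset.univ.erase i, z j := fun j => by
      rw [hSz]; exact Finset.single_le_sum (fun k _ => hz k) (Finset.mem_univ j)
    have hS0 : 0 ≤ z i + ∑ j ∈ Finset.univ.erase i, z j := by
      rw [hSz]; exact Finset.sum_nonneg fun k _ => hz k
    set S : ℝ := z i + ∑ j ∈ Finset.univ.erase i, z j with hSdef
    have h1 : |f (x + z) - f x| ≤ (∑ j, (1 + 1 / x j)) * S := by
      rw [hdiff x z]
      calc |∑ j, (z j - (Real.log (x j + z j) - Real.log (x j)))|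
          ≤ ∑ j, |z j - (Real.log (x j + z j) - Real.log (x j))| :=
            Finset.abs_sum_le_sum_abs _ _
        _ ≤ ∑ j, (1 + 1 / x j) * S := by
            apply Finset.sum_le_sum; intro j _
            have ha := habs (x j) (z j) (hx j) (hz j)
            have h3 : z j / x j ≤ S / x j := (div_le_div_iff_of_pos_right (hx j)).mpr (hzS j)
            have h4 : (1 + 1 / x j) * S = S + S / x j := by ring
            have h5 := hzS j
            linarith
        _ = (∑ j, (1 + 1 / x j)) * S := by rw [← Finset.sum_mul]
    have h2 : |(1 - 1 / x i) * z i| ≤ (1 + 1 / x i) * S := by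
      rw [abs_mul]
      have hxi := hx i
      have habs1 : |1 - 1 / x i| ≤ 1 + 1 / x i := by
        have hp : 0 < 1 / x i := by positivity
        rw [abs_le]; constructor <;> linarith
      have hzabs : |z i| = z i := abs_of_nonneg (hz i)
      calc |1 - 1 / x i| * |z i| ≤ (1 + 1 / x i) * |z i| :=
            mul_le_mul_of_nonneg_right habs1 (abs_nonneg _)
        _ ≤ (1 + 1 / x i) * S := by
            rw [hzabs]; exact mul_le_mul_of_nonneg_left (hzS i) (by positivity)
    calc |f (x + z) - f x - (1 - 1 / x i) * z i|
        ≤ |f (x + z) - f x| + |(1 - 1 / x i) * z i| := by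
          rw [sub_eq_add_neg]
          exact (abs_add_le _ _).trans (by rw [abs_neg])
      _ ≤ (∑ j, (1 + 1 / x j)) * S + (1 + 1 / x i) * S := add_le_add h1 h2
      _ = ((∑ j, (1 + 1 / x j)) + (1 + 1 / x i)) * S := by ring
  refine ⟨fun x hx => ⟨hIν x hx, hIμ x hx⟩, ?_⟩
  -- main bound
  intro m hm
  set Iν : ℝ := ∫ z, ‖z‖ ∂ν with hIνdef
  set Iμ : Fin d → ℝ := fun i =>
    ∫ z, (z i + ∑ j ∈ Finset.univ.erase i, z j) ∂(μ i) with hIμdef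
  set K0 : ℝ := (∑ i, (|η i| + (∑ j, |b i j| * m) + (∑ j, |c i j| * (m * m))
      + |b i i| + (∑ j, |c i j| * m))) + (d : ℝ) * Iν + ∑ i, (m + 1) * Iμ i with hK0def
  refine ⟨max K0 1, lt_of_lt_of_le one_pos (le_max_right _ _), ?_⟩
  intro x hx
  have hx0 : ∀ i, 0 < x i := fun i => (hx i).1
  have hf1 : 1 ≤ f x := by
    rw [hf x]
    have hterm : ∀ i ∈ Finset.univ, (0 : ℝ) ≤ x i - Real.log (x i) := fun i _ => by
      have := Real.log_le_sub_one_of_pos (hx0 i); linarith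
    have := Finset.sum_nonneg hterm
    linarith
  -- drift term bound
  have hdrift : ∀ i, (η i + (∑ j, b i j * x j) + γ x i) * (1 - 1 / x i) + σ i / x i
      ≤ |η i| + (∑ j, |b i j| * m) + (∑ j, |c i j| * (m * m)) + |b i i|
        + (∑ j, |c i j| * m) := by
    intro i
    have hxi := hx0 i
    have hxm := (hx i).2
    have hne : x i ≠ 0 := hxi.ne'
    have hexp : (η i + (∑ j, b i j * x j) + γ x i) * (1 - 1 / x i) + σ i / x i
        = η i + (∑ j, b i j * x j) + γ x i + (σ i - η i) / x i
          - (∑ j, b i j * x j) / x i - γ x i / x i := by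
      field_simp
      ring
    have hB : (∑ j, b i j * x j) ≤ ∑ j, |b i j| * m := by
      apply Finset.sum_le_sum; intro j _
      have h1 : b i j * x j ≤ |b i j| * x j :=
        mul_le_mul_of_nonneg_right (le_abs_self _) (hx0 j).le
      have h2 : |b i j| * x j ≤ |b i j| * m :=
        mul_le_mul_of_nonneg_left (hx j).2.le (abs_nonneg _)
      linarith
    have hγb : γ x i ≤ ∑ j, |c i j| * (m * m) := by
      rw [hγ]
      apply Finset.sum_le_sum; intro j _
      have h1 : c i j * x i * x j ≤ |c i j| * x i * x j :=
        mul_le_mul_of_nonneg_right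
          (mul_le_mul_of_nonneg_right (le_abs_self _) (hx0 i).le) (hx0 j).le
      have h2 : |c i j| * x i * x j ≤ |c i j| * (m * m) := by
        have h3 : x i * x j ≤ m * m := by nlinarith [(hx0 i), (hx0 j), (hx i).2, (hx j).2]
        calc |c i j| * x i * x j = |c i j| * (x i * x j) := by ring
          _ ≤ |c i j| * (m * m) := mul_le_mul_of_nonneg_left h3 (abs_nonneg _)
      linarith
    have hσ : (σ i - η i) / x i ≤ 0 :=
      div_nonpos_of_nonpos_of_nonneg (by linarith [(hησ i).2]) hxi.le
    have hBd : -((∑ j, b i j * x j) / x i) ≤ |b i i| := by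
      have h1 : b i i * x i ≤ ∑ j, b i j * x j := by
        rw [← Finset.add_sum_erase _ _ (Finset.mem_univ i)]
        have h0 : (0 : ℝ) ≤ ∑ j ∈ Finset.univ.erase i, b i j * x j :=
          Finset.sum_nonneg fun j hj =>
            mul_nonneg (hb i j (Finset.ne_of_mem_erase hj).symm) (hx0 j).le
        linarith
      have h2 : b i i ≤ (∑ j, b i j * x j) / x i := by
        rw [le_div_iff₀ hxi]; exact h1
      have h3 := neg_abs_le (b i i)
      linarith
    have hγd : -(γ x i / x i) ≤ ∑ j, |c i j| * m := by
      have h1 : γ x i / x i = ∑ j, c i j * x j := by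
        rw [hγ, Finset.sum_div]
        exact Finset.sum_congr rfl fun j _ => by field_simp
      rw [h1, ← Finset.sum_neg_distrib]
      apply Finset.sum_le_sum; intro j _
      have h2 : -(c i j * x j) = (-(c i j)) * x j := by ring
      have h3 : (-(c i j)) * x j ≤ |c i j| * x j :=
        mul_le_mul_of_nonneg_right (neg_le_abs _) (hx0 j).le
      have h4 : |c i j| * x j ≤ |c i j| * m :=
        mul_le_mul_of_nonneg_left (hx j).2.le (abs_nonneg _)
      linarith [h2 ▸ h3]
    have hη : η i ≤ |η i| := le_abs_self _
    rw [hexp]; linarith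
  -- ν-integral bound
  have hνle : ∫ z, (f (x + z) - f x) ∂ν ≤ (d : ℝ) * Iν := by
    have hint1 := hIν x hx0
    have hint2 : Integrable (fun z : EuclideanSpace ℝ (Fin d) => (d : ℝ) * ‖z‖) ν :=
      hνint.const_mul _
    have hmono : (fun z => f (x + z) - f x) ≤ᵐ[ν]
        fun z : EuclideanSpace ℝ (Fin d) => (d : ℝ) * ‖z‖ := by
      filter_upwards [hν] with z hz
      rw [hdiff x z]
      calc ∑ j, (z j - (Real.log (x j + z j) - Real.log (x j)))
          ≤ ∑ _j : Fin d, ‖z‖ := by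
            apply Finset.sum_le_sum; intro j _
            have h1 := hub (x j) (z j) (hx0 j) (hz j)
            have h2 : z j ≤ ‖z‖ := le_trans (le_abs_self _) (aux_coord_le_norm z j)
            linarith
        _ = (d : ℝ) * ‖z‖ := by
            rw [Finset.sum_const, Finset.card_univ, Fintype.card_fin, nsmul_eq_mul]
    calc ∫ z, (f (x + z) - f x) ∂ν ≤ ∫ z, (d : ℝ) * ‖z‖ ∂ν :=
          integral_mono_ae hint1 hint2 hmono
      _ = (d : ℝ) * Iν := by rw [hIνdef]; exact integral_const_mul _ _
  -- μ-integral bounds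
  have hμle : ∀ i, x i * ∫ z, (f (x + z) - f x - (1 - 1 / x i) * z i) ∂(μ i)
      ≤ (m + 1) * Iμ i := by
    intro i
    have hxi := hx0 i
    have hzi_int : Integrable (fun z : EuclideanSpace ℝ (Fin d) => z i) (μ i) := by
      refine Integrable.mono' (hμint i) (hproj i).aestronglyMeasurable ?_
      filter_upwards [hμ i] with z hz
      rw [Real.norm_eq_abs, abs_of_nonneg (hz i)]
      have h0 : (0 : ℝ) ≤ ∑ j ∈ Finset.univ.erase i, z j :=
        Finset.sum_nonneg fun k hk => hz k
      linarith
    have herase_int : Integrable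
        (fun z : EuclideanSpace ℝ (Fin d) => ∑ j ∈ Finset.univ.erase i, z j) (μ i) := by
      have h := (hμint i).sub hzi_int
      refine h.congr (Filter.Eventually.of_forall fun z => ?_)
      show (z i + ∑ j ∈ Finset.univ.erase i, z j) - z i = ∑ j ∈ Finset.univ.erase i, z j
      ring
    have hg_int := hIμ x hx0 i
    have hdiv_int : Integrable (fun z : EuclideanSpace ℝ (Fin d) => z i / x i) (μ i) := by
      simpa [div_eq_inv_mul] using hzi_int.const_mul (x i)⁻¹
    have hrhs_int : Integrable (fun z : EuclideanSpace ℝ (Fin d) =>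
        (∑ j ∈ Finset.univ.erase i, z j) + z i / x i) (μ i) := herase_int.add hdiv_int
    have hmono : (fun z => f (x + z) - f x - (1 - 1 / x i) * z i) ≤ᵐ[μ i]
        fun z : EuclideanSpace ℝ (Fin d) =>
          (∑ j ∈ Finset.univ.erase i, z j) + z i / x i := by
      filter_upwards [hμ i] with z hz
      rw [hdiff x z]
      have hsum : ∑ j, (z j - (Real.log (x j + z j) - Real.log (x j))) ≤ ∑ j, z j :=
        Finset.sum_le_sum fun j _ => hub (x j) (z j) (hx0 j) (hz j)
      have hSz : z i + ∑ j ∈ Finset.univ.erase i, z j = ∑ j, z j :=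
        Finset.add_sum_erase _ _ (Finset.mem_univ i)
      have hring : (1 - 1 / x i) * z i = z i - z i / x i := by
        field_simp
      linarith
    have h1 : ∫ z, (f (x + z) - f x - (1 - 1 / x i) * z i) ∂(μ i)
        ≤ ∫ z, ((∑ j ∈ Finset.univ.erase i, z j) + z i / x i) ∂(μ i) :=
      integral_mono_ae hg_int hrhs_int hmono
    have hA : 0 ≤ ∫ z, z i ∂(μ i) :=
      integral_nonneg_of_ae (by filter_upwards [hμ i] with z hz; exact hz i)
    have hBpos : 0 ≤ ∫ z, (∑ j ∈ Finset.univ.erase i, z j) ∂(μ i) :=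
      integral_nonneg_of_ae (by
        filter_upwards [hμ i] with z hz
        exact Finset.sum_nonneg fun k _ => hz k)
    have hsplit : ∫ z, ((∑ j ∈ Finset.univ.erase i, z j) + z i / x i) ∂(μ i)
        = (∫ z, (∑ j ∈ Finset.univ.erase i, z j) ∂(μ i)) + (∫ z, z i ∂(μ i)) / x i := by
      rw [integral_add herase_int hdiv_int, integral_div]
    have hIμeq : Iμ i = (∫ z, z i ∂(μ i))
        + ∫ z, (∑ j ∈ Finset.univ.erase i, z j) ∂(μ i) := by
      rw [hIμdef]
      exact integral_add hzi_int herase_int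
    have h2 : x i * ∫ z, (f (x + z) - f x - (1 - 1 / x i) * z i) ∂(μ i)
        ≤ x i * ((∫ z, (∑ j ∈ Finset.univ.erase i, z j) ∂(μ i))
            + (∫ z, z i ∂(μ i)) / x i) := by
      rw [← hsplit]
      exact mul_le_mul_of_nonneg_left h1 hxi.le
    have hcancel : x i * ((∫ z, z i ∂(μ i)) / x i) = ∫ z, z i ∂(μ i) := by
      rw [mul_comm, div_mul_cancel₀ _ hxi.ne']
    have h3 : x i * ((∫ z, (∑ j ∈ Finset.univ.erase i, z j) ∂(μ i))
          + (∫ z, z i ∂(μ i)) / x i)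
        = x i * (∫ z, (∑ j ∈ Finset.univ.erase i, z j) ∂(μ i)) + ∫ z, z i ∂(μ i) := by
      rw [mul_add, hcancel]
    have hxm := (hx i).2
    have h4 : x i * (∫ z, (∑ j ∈ Finset.univ.erase i, z j) ∂(μ i))
        ≤ m * (∫ z, (∑ j ∈ Finset.univ.erase i, z j) ∂(μ i)) :=
      mul_le_mul_of_nonneg_right hxm.le hBpos
    have h5 : m * (∫ z, (∑ j ∈ Finset.univ.erase i, z j) ∂(μ i)) + ∫ z, z i ∂(μ i)
        ≤ (m + 1) * Iμ i := by
      rw [hIμeq]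
      nlinarith [mul_nonneg hm.le hA]
    linarith
  -- combine
  have hLfx := hLf x hx0
  have hT1 : (∑ i, (η i + (∑ j, b i j * x j) + γ x i) * (1 - 1 / x i)) + ∑ i, σ i / x i
      ≤ ∑ i, (|η i| + (∑ j, |b i j| * m) + (∑ j, |c i j| * (m * m)) + |b i i|
        + (∑ j, |c i j| * m)) := by
    rw [← Finset.sum_add_distrib]
    exact Finset.sum_le_sum fun i _ => hdrift i
  have hT3 : (∑ i, x i * ∫ z, (f (x + z) - f x - (1 - 1 / x i) * z i) ∂(μ i))
      ≤ ∑ i, (m + 1) * Iμ i :=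
    Finset.sum_le_sum fun i _ => hμle i
  have hK0 : Lf x ≤ K0 := by
    rw [hLfx, hK0def]
    linarith
  calc Lf x ≤ K0 := hK0
    _ ≤ max K0 1 := le_max_left _ _
    _ = max K0 1 * 1 := (mul_one _).symm
    _ ≤ max K0 1 * f x :=
        mul_le_mul_of_nonneg_left hf1 (le_trans zero_le_one (le_max_right _ _))
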